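/- Let f : ℝⁿ → ℝ be continuously differentiable with L-Lipschitz gradient, fix u ∈ ℝⁿ with g := ∇f(u) ≠ 0, let H be symmetric positive semidefinite with ‖H‖ ≤ M_H, γ > 0, η ∈ (0,1), m_γ(s) = f(u) + gᵀs + (1/2)sᵀ(H + γI)s, and s* = −(H + γI)⁻¹ g. If the iteration is unsuccessful, i.e. f(u + s*) − f(u) > η(m_γ(s*) − m_γ(0)), then (2 − η)γ² − (L − M_H)γ − L·M_H < 0, and consequently γ < γ̄ := (L − M_H + √((L − M_H)² + 4(2 − η) L M_H)) / (2(2 − η)). -/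

import Mathlib

open Matrix
open scoped Matrix.Norms.L2Operator RealInnerProductSpace Gradient

/-- Descent lemma: a `C¹` function with `L`-Lipschitz gradient satisfies
`f (u + s) ≤ f u + ⟪∇f u, s⟫ + (L/2)‖s‖²`. -/
lemma descent_lemma_aux {E : Type*} [NormedAddCommGroup E] [InnerProductSpace ℝ E]
    [CompleteSpace E] (f : E → ℝ) (hf : ContDiff ℝ 1 f) (L : ℝ)
    (hLip : ∀ x y : E, ‖∇ f x - ∇ f y‖ ≤ L * ‖x - y‖) (u s : E) :
    f (u + s) ≤ f u + ⟪∇ f u, s⟫ + L / 2 * ‖s‖ ^ 2 := by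
  have hdiff : ∀ x : E, HasFDerivAt f ((InnerProductSpace.toDual ℝ E) (∇ f x)) x := by
    intro x
    exact hasGradientAt_iff_hasFDerivAt.mp (hf.differentiable one_ne_zero x).hasGradientAt
  have hgradcont : Continuous (∇ f) := by
    have : (∇ f) = fun x => (InnerProductSpace.toDual ℝ E).symm (fderiv ℝ f x) := rfl
    rw [this]
    exact (InnerProductSpace.toDual ℝ E).symm.continuous.comp (hf.continuous_fderiv one_ne_zero)
  have hφ : ∀ t : ℝ, HasDerivAt (fun t : ℝ => f (u + t • s)) ⟪∇ f (u + t • s), s⟫ t := by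
    intro t
    have hc : HasDerivAt (fun t : ℝ => u + t • s) s t := by
      simpa using ((hasDerivAt_id t).smul_const s).const_add u
    exact (hdiff (u + t • s)).comp_hasDerivAt t hc
  have hcont : Continuous fun t : ℝ => ⟪∇ f (u + t • s), s⟫ := by
    exact (hgradcont.comp (by continuity)).inner continuous_const
  have hkey : f (u + s) - f u = ∫ t in (0:ℝ)..1, ⟪∇ f (u + t • s), s⟫ := by
    have := intervalIntegral.integral_eq_sub_of_hasDerivAt (f := fun t : ℝ => f (u + t • s))
      (fun t _ => hφ t) (hcont.intervalIntegrable 0 1)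
    simp only [one_smul, zero_smul, add_zero] at this
    linarith [this]
  have hbound : (∫ t in (0:ℝ)..1, ⟪∇ f (u + t • s), s⟫)
      ≤ ∫ t in (0:ℝ)..1, (⟪∇ f u, s⟫ + L * t * ‖s‖ ^ 2) := by
    apply intervalIntegral.integral_mono_on (by norm_num)
      (hcont.intervalIntegrable 0 1) (by apply Continuous.intervalIntegrable; continuity)
    intro t ht
    have h1 : ⟪∇ f (u + t • s) - ∇ f u, s⟫ ≤ ‖∇ f (u + t • s) - ∇ f u‖ * ‖s‖ :=
      real_inner_le_norm _ _
    have h2 : ‖∇ f (u + t • s) - ∇ f u‖ ≤ L * (t * ‖s‖) := by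
      have := hLip (u + t • s) u
      simpa [norm_smul, Real.norm_eq_abs, abs_of_nonneg ht.1] using this
    have h3 : ⟪∇ f (u + t • s) - ∇ f u, s⟫ ≤ L * (t * ‖s‖) * ‖s‖ :=
      h1.trans (by nlinarith [norm_nonneg s])
    rw [inner_sub_left] at h3
    nlinarith [h3]
  have hint : (∫ t in (0:ℝ)..1, (⟪∇ f u, s⟫ + L * t * ‖s‖ ^ 2))
      = ⟪∇ f u, s⟫ + L / 2 * ‖s‖ ^ 2 := by
    rw [intervalIntegral.integral_add (by apply Continuous.intervalIntegrable; continuity)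
      (by apply Continuous.intervalIntegrable; continuity)]
    simp only [intervalIntegral.integral_const, smul_eq_mul]
    have : (∫ t in (0:ℝ)..1, L * t * ‖s‖ ^ 2) = L * ‖s‖^2 * ∫ t in (0:ℝ)..1, t := by
      rw [← intervalIntegral.integral_const_mul]
      congr 1; ext t; ring
    rw [this, integral_id]
    ring
  linarith [hkey ▸ hbound.trans_eq hint]

set_option maxHeartbeats 1600000 in
/-- If the exact-step iteration is unsuccessful, then
`(2-η)γ² - (L - M_H)γ - L·M_H < 0`, hence
`γ < (L - M_H + √((L-M_H)² + 4(2-η) L M_H)) / (2(2-η))`. -/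
theorem unsuccessful_iteration_gamma_bound
    (n : ℕ) (f : EuclideanSpace ℝ (Fin n) → ℝ)
    (hf : ContDiff ℝ 1 f)
    (L : ℝ) (hL : 0 < L)
    (hLip : ∀ x y : EuclideanSpace ℝ (Fin n), ‖∇ f x - ∇ f y‖ ≤ L * ‖x - y‖)
    (u : EuclideanSpace ℝ (Fin n))
    (g : EuclideanSpace ℝ (Fin n)) (hg : g = ∇ f u) (hg0 : g ≠ 0)
    (H : Matrix (Fin n) (Fin n) ℝ) (hH : H.PosSemidef)
    (M_H : ℝ) (hMH : 0 < M_H) (hHbd : ‖H‖ ≤ M_H)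
    (γ : ℝ) (hγ : 0 < γ)
    (η : ℝ) (hη : η ∈ Set.Ioo (0:ℝ) 1)
    (A : Matrix (Fin n) (Fin n) ℝ) (hA : A = H + γ • (1 : Matrix (Fin n) (Fin n) ℝ))
    (mγ : EuclideanSpace ℝ (Fin n) → ℝ)
    (hmγ : ∀ s, mγ s = f u + ⟪g, s⟫ + (1/2) * ⟪s, Matrix.toEuclideanLin A s⟫)
    (sstar : EuclideanSpace ℝ (Fin n)) (hsstar : sstar = -(Matrix.toEuclideanLin A⁻¹ g))
    (hunsucc : f (u + sstar) - f u > η * (mγ sstar - mγ 0)) :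
    (2 - η) * γ^2 - (L - M_H) * γ - L * M_H < 0 ∧
      γ < (L - M_H + Real.sqrt ((L - M_H)^2 + 4 * (2 - η) * L * M_H)) / (2 * (2 - η)) := by
  obtain ⟨hη0, hη1⟩ := hη
  -- Linear algebra: `A` is positive definite, hence invertible.
  have hsm : (γ • (1 : Matrix (Fin n) (Fin n) ℝ)).PosDef := by
    rw [smul_one_eq_diagonal]
    exact posDef_diagonal_iff.mpr fun _ => hγ
  have hApd : A.PosDef := hA ▸ Matrix.PosDef.posSemidef_add hH hsm
  have hinv : A * A⁻¹ = 1 :=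
    Matrix.mul_nonsing_inv A ((Matrix.isUnit_iff_isUnit_det A).mp hApd.isUnit)
  set v : EuclideanSpace ℝ (Fin n) := Matrix.toEuclideanLin A⁻¹ g with hv
  have hAv : Matrix.toEuclideanLin A v = g := by
    rw [hv, toEuclideanLin_apply, toEuclideanLin_apply, WithLp.ofLp_toLp,
      mulVec_mulVec, hinv, one_mulVec, WithLp.toLp_ofLp]
  have hv0 : v ≠ 0 := by
    intro h
    exact hg0 (by rw [← hAv, h, map_zero])
  have hHpsd : ∀ x : EuclideanSpace ℝ (Fin n),
      0 ≤ ⟪x, Matrix.toEuclideanLin H x⟫ := by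
    intro x
    have h2 := hH.dotProduct_mulVec_nonneg ((WithLp.equiv 2 (Fin n → ℝ)) x)
    rw [toEuclideanLin_apply]
    simpa [PiLp.inner_apply, dotProduct, RCLike.inner_apply, starRingEnd_apply, mul_comm] using h2
  have h1x : ∀ x : EuclideanSpace ℝ (Fin n),
      Matrix.toEuclideanLin (1 : Matrix (Fin n) (Fin n) ℝ) x = x := by
    intro x
    rw [toEuclideanLin_apply, one_mulVec, WithLp.toLp_ofLp]
  have hinnerA : ⟪v, Matrix.toEuclideanLin A v⟫
      = ⟪v, Matrix.toEuclideanLin H v⟫ + γ * ‖v‖^2 := by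
    rw [hA, map_add, _root_.map_smul, LinearMap.add_apply, LinearMap.smul_apply, h1x,
      inner_add_right, real_inner_smul_right, real_inner_self_eq_norm_sq]
  have hvg : ⟪v, g⟫ = ⟪g, v⟫ := real_inner_comm _ _
  have hgv : γ * ‖v‖^2 ≤ ⟪g, v⟫ := by
    have h3 := hHpsd v
    have h4 : ⟪g, v⟫ = ⟪v, Matrix.toEuclideanLin A v⟫ := by
      rw [hAv]; exact real_inner_comm _ _
    linarith [hinnerA ▸ h4]
  -- The model decrease.
  have hm0 : mγ 0 = f u := by simp [hmγ]
  have hsv : sstar = -v := hsstar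
  have hms : mγ sstar - mγ 0 = -(1/2) * ⟪g, v⟫ := by
    rw [hmγ, hm0, hsv, map_neg, hAv]
    simp only [inner_neg_left, inner_neg_right, neg_neg]
    rw [hvg]; ring
  -- The descent lemma.
  have hdesc : f (u + sstar) ≤ f u + ⟪g, sstar⟫ + L / 2 * ‖sstar‖ ^ 2 := by
    rw [hg]
    exact descent_lemma_aux f hf L hLip u sstar
  have hgs : ⟪g, sstar⟫ = -⟪g, v⟫ := by rw [hsv, inner_neg_right]
  have hns : ‖sstar‖ = ‖v‖ := by rw [hsv, norm_neg]
  -- Unsuccessful iteration gives `L/2 ‖v‖² > (1 - η/2) ⟪g, v⟫`.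
  have hkey : L / 2 * ‖v‖ ^ 2 > (1 - η / 2) * ⟪g, v⟫ := by
    rw [hms] at hunsucc
    rw [hgs, hns] at hdesc
    linarith
  have hnv : 0 < ‖v‖ := norm_pos_iff.mpr hv0
  have hw : 0 < ‖v‖ ^ 2 := pow_pos hnv 2
  -- Hence `(2 - η) γ < L`.
  have hLγ : (2 - η) * γ < L := by
    have h5 : ((1 - η / 2) * γ) * ‖v‖^2 ≤ (1 - η / 2) * ⟪g, v⟫ := by
      rw [mul_assoc]
      exact mul_le_mul_of_nonneg_left hgv (by linarith)
    have h6 : ((1 - η / 2) * γ) * ‖v‖^2 < (L / 2) * ‖v‖^2 := lt_of_le_of_lt h5 hkey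
    have h7 : (1 - η / 2) * γ < L / 2 := lt_of_mul_lt_mul_right h6 hw.le
    linarith
  -- Part (a): the quadratic inequality.
  have hγL : γ < L := by
    have h8 : γ * 1 ≤ γ * (2 - η) := mul_le_mul_of_nonneg_left (by linarith) hγ.le
    linarith
  have hquad : (2 - η) * γ^2 - (L - M_H) * γ - L * M_H < 0 := by
    have t1 : γ * ((2 - η) * γ - L) < 0 := mul_neg_of_pos_of_neg hγ (by linarith)
    have t2 : M_H * (γ - L) < 0 := mul_neg_of_pos_of_neg hMH (by linarith)
    nlinarith [t1, t2]
  refine ⟨hquad, ?_⟩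
  -- Part (b): the root bound.
  have hD : 0 < (L - M_H)^2 + 4 * (2 - η) * L * M_H := by
    have h9 : 0 < (2 - η) * (L * M_H) := mul_pos (by linarith) (mul_pos hL hMH)
    linarith [sq_nonneg (L - M_H), h9]
  set s : ℝ := Real.sqrt ((L - M_H)^2 + 4 * (2 - η) * L * M_H) with hs
  have hs0 : 0 ≤ s := Real.sqrt_nonneg _
  have hs2 : s ^ 2 = (L - M_H)^2 + 4 * (2 - η) * L * M_H := Real.sq_sqrt hD.le
  have h9 : (2 * (2 - η) * γ - (L - M_H))^2 < s^2 := by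
    have h10 : 4 * (2 - η) * ((2 - η) * γ^2 - (L - M_H) * γ - L * M_H) < 0 :=
      mul_neg_of_pos_of_neg (by linarith) hquad
    nlinarith [h10, hs2]
  have h11 : 2 * (2 - η) * γ - (L - M_H) < s := by
    nlinarith [h9, hs0]
  rw [lt_div_iff₀ (by linarith : (0:ℝ) < 2 * (2 - η))]
  linarith
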